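/- Let M ⊆ S_k^n be a (⊓,⊔)-closed set. Then all maximal elements of (M, ⪯) have the same support: if x and y are both maximal in M, then supp x = supp y. -/

import Mathlib

/-- The partial order on `S_k = {0,1,…,k}`: `a ⪯ b` iff `a = 0` or `a = b`. -/
def pre {k : ℕ} (a b : Fin (k + 1)) : Prop := a = 0 ∨ a = b

instance {k : ℕ} (a b : Fin (k + 1)) : Decidable (pre a b) :=
  decidable_of_iff (a = 0 ∨ a = b) Iff.rfl

/-- The componentwise order `⪯` on `S_k^n`. -/
def preV {k n : ℕ} (x y : Fin n → Fin (k + 1)) : Prop := ∀ i, pre (x i) (y i)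

/-- The operation `⊓` on `S_k^n`. -/
def sqcap {k n : ℕ} (x y : Fin n → Fin (k + 1)) : Fin n → Fin (k + 1) :=
  fun i => if pre (x i) (y i) ∨ pre (y i) (x i) then min (x i) (y i) else 0

/-- The operation `⊔` on `S_k^n`. -/
def sqcup {k n : ℕ} (x y : Fin n → Fin (k + 1)) : Fin n → Fin (k + 1) :=
  fun i => if pre (x i) (y i) ∨ pre (y i) (x i) then max (x i) (y i) else 0

/-- A `(⊓,⊔)`-closed subset of `S_k^n`. -/
def closedSet {k n : ℕ} (M : Set (Fin n → Fin (k + 1))) : Prop :=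
  M.Nonempty ∧ ∀ x ∈ M, ∀ y ∈ M, sqcap x y ∈ M ∧ sqcup x y ∈ M

/-- Strict version of `⪯`. -/
def strictPreV {k n : ℕ} (x y : Fin n → Fin (k + 1)) : Prop := preV x y ∧ x ≠ y

/-- `m` is the minimum element of `M` with respect to `⪯`. -/
def isMinOf {k n : ℕ} (M : Set (Fin n → Fin (k + 1))) (m : Fin n → Fin (k + 1)) : Prop :=
  m ∈ M ∧ ∀ x ∈ M, preV m x

/-- `u` is the least upper bound of `S` inside `(M, ⪯)`. -/
def isLUBof {k n : ℕ} (M S : Set (Fin n → Fin (k + 1))) (u : Fin n → Fin (k + 1)) : Prop :=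
  u ∈ M ∧ (∀ s ∈ S, preV s u) ∧ ∀ w ∈ M, (∀ s ∈ S, preV s w) → preV u w

/-- `x` is a join-irreducible element of `M`. -/
def joinIrr {k n : ℕ} (M : Set (Fin n → Fin (k + 1))) (x : Fin n → Fin (k + 1)) : Prop :=
  x ∈ M ∧ ¬ isMinOf M x ∧ ¬ isLUBof M {y | y ∈ M ∧ strictPreV y x} x

/-- A `(⊓,⊔)`-closed set is simple if its minimum element is the all-zero vector. -/
def simpleSet {k n : ℕ} (M : Set (Fin n → Fin (k + 1))) : Prop :=
  isMinOf M (fun _ => 0)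

/-- `y` is a lower cover of `x` in `M`. -/
def lowerCover {k n : ℕ} (M : Set (Fin n → Fin (k + 1)))
    (y x : Fin n → Fin (k + 1)) : Prop :=
  y ∈ M ∧ strictPreV y x ∧ ¬ ∃ z ∈ M, strictPreV y z ∧ strictPreV z x

/-- `d` is the differential of `x` in `M` (with respect to some lower cover of `x`). -/
def isDiff {k n : ℕ} (M : Set (Fin n → Fin (k + 1)))
    (x d : Fin n → Fin (k + 1)) : Prop :=
  ∃ y, lowerCover M y x ∧ ∀ i, d i = if x i ≠ 0 ∧ y i = 0 then x i else 0

/-- The support of `x ∈ S_k^n`. -/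
def supp {k n : ℕ} (x : Fin n → Fin (k + 1)) : Set (Fin n) := {i | x i ≠ 0}

/-- `x ⌣ y`: `x` and `y` have no common upper bound in `S_k^n`. -/
def incons {k n : ℕ} (x y : Fin n → Fin (k + 1)) : Prop :=
  ∃ i, x i ≠ 0 ∧ y i ≠ 0 ∧ x i ≠ y i


lemma sqcup_sqcup_apply {k n : ℕ} (x y : Fin n → Fin (k+1)) (i : Fin n) :
    sqcup y (sqcup x y) i = if y i = 0 then x i else y i := by
  simp only [sqcup, pre]
  rcases eq_or_ne (y i) 0 with hy | hy
  · simp [hy]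
  · rcases eq_or_ne (x i) 0 with hx | hx
    · simp [hx, hy]
    · rcases eq_or_ne (x i) (y i) with hxy | hxy
      · simp [hxy, hy]
      · have h1 : ¬ ((x i = 0 ∨ x i = y i) ∨ (y i = 0 ∨ y i = x i)) := by
          push_neg; exact ⟨⟨hx, hxy⟩, hy, Ne.symm hxy⟩
        simp only [h1, ↓reduceIte]
        simp [hy]

lemma supp_subset_of_max {k n : ℕ} (M : Set (Fin n → Fin (k + 1))) (hM : closedSet M)
    (a b : Fin n → Fin (k + 1)) (ha : a ∈ M) (hb : b ∈ M)
    (hbmax : ¬ ∃ z ∈ M, strictPreV b z) : supp a ⊆ supp b := by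
  set z := sqcup b (sqcup a b) with hzdef
  have hz : z ∈ M := (hM.2 b hb _ ((hM.2 a ha b hb).2)).2
  have hpre : preV b z := by
    intro i
    rcases eq_or_ne (b i) 0 with h | h
    · exact Or.inl h
    · right
      rw [hzdef, sqcup_sqcup_apply, if_neg h]
  have hzb : z = b := by
    by_contra hne
    exact hbmax ⟨z, hz, hpre, fun h => hne h.symm⟩
  intro i hi
  simp only [supp, Set.mem_setOf_eq] at hi ⊢
  intro hb0
  apply hi
  have := congrFun hzb i
  rw [hzdef] at this
  rw [sqcup_sqcup_apply, if_pos hb0] at this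
  rw [this, hb0]

/-- All maximal elements of a `(⊓,⊔)`-closed set have the same support. -/
theorem maximal_same_support (k n : ℕ) (hk : 0 < k) (hn : 0 < n)
    (M : Set (Fin n → Fin (k + 1))) (hM : closedSet M)
    (x y : Fin n → Fin (k + 1)) (hx : x ∈ M) (hy : y ∈ M)
    (hxmax : ¬ ∃ z ∈ M, strictPreV x z)
    (hymax : ¬ ∃ z ∈ M, strictPreV y z) :
    supp x = supp y := by
  exact Set.Subset.antisymm (supp_subset_of_max M hM x y hx hy hymax)
    (supp_subset_of_max M hM y x hy hx hxmax)
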